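/- For t ≥ 1 (t < 2), the t-Hilbert co-simplex distance ρ(p, q) = log_t( (max_i p_i/q_i) / (min_i p_i/q_i) ) on vectors p, q with strictly positive entries satisfies the triangle inequality ρ(p, r) ≤ ρ(p, q) + ρ(q, r). -/

import Mathlib

noncomputable def tlog (t x : ℝ) : ℝ :=
  if t = 1 then Real.log x else (x ^ (1 - t) - 1) / (1 - t)

noncomputable def tHilbert {ι : Type*} [Fintype ι] [Nonempty ι] (t : ℝ) (p q : ι → ℝ) : ℝ :=
  tlog t ((Finset.univ.sup' Finset.univ_nonempty fun i => p i / q i) /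
          (Finset.univ.inf' Finset.univ_nonempty fun i => p i / q i))

lemma tlog_mono (t : ℝ) (ht1 : 1 ≤ t) {x y : ℝ} (hx : 0 < x) (hxy : x ≤ y) :
    tlog t x ≤ tlog t y := by
  unfold tlog
  split_ifs with h
  · exact Real.log_le_log hx hxy
  · have ht : t > 1 := lt_of_le_of_ne ht1 (Ne.symm h)
    have h1t : 1 - t < 0 := by linarith
    have : y ^ (1 - t) ≤ x ^ (1 - t) :=
      Real.rpow_le_rpow_of_nonpos hx hxy h1t.le
    have := sub_le_sub_right this 1
    exact div_le_div_of_nonpos_of_le h1t.le this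

lemma tlog_mul_le (t : ℝ) (ht1 : 1 ≤ t) {a b : ℝ} (ha : 1 ≤ a) (hb : 1 ≤ b) :
    tlog t (a * b) ≤ tlog t a + tlog t b := by
  unfold tlog
  split_ifs with h
  · rw [Real.log_mul (by linarith) (by linarith)]
  · have ht : t > 1 := lt_of_le_of_ne ht1 (Ne.symm h)
    have h1t : 1 - t < 0 := by linarith
    have ha0 : (0:ℝ) < a := by linarith
    have hb0 : (0:ℝ) < b := by linarith
    rw [← add_div]
    apply div_le_div_of_nonpos_of_le h1t.le
    have hab : (a * b) ^ (1 - t) = a ^ (1 - t) * b ^ (1 - t) :=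
      Real.mul_rpow ha0.le hb0.le
    have hu : a ^ (1 - t) ≤ 1 := Real.rpow_le_one_of_one_le_of_nonpos ha h1t.le
    have hv : b ^ (1 - t) ≤ 1 := Real.rpow_le_one_of_one_le_of_nonpos hb h1t.le
    nlinarith [mul_nonneg (sub_nonneg.2 hu) (sub_nonneg.2 hv)]

theorem tHilbert_triangle {ι : Type*} [Fintype ι] [Nonempty ι] (t : ℝ)
    (ht1 : 1 ≤ t) (ht2 : t < 2) (p q r : ι → ℝ)
    (hp : ∀ i, 0 < p i) (hq : ∀ i, 0 < q i) (hr : ∀ i, 0 < r i) :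
    tHilbert t p r ≤ tHilbert t p q + tHilbert t q r := by
  classical
  set Mpq := Finset.univ.sup' Finset.univ_nonempty fun i => p i / q i with hMpq
  set mpq := Finset.univ.inf' Finset.univ_nonempty fun i => p i / q i with hmpq
  set Mqr := Finset.univ.sup' Finset.univ_nonempty fun i => q i / r i with hMqr
  set mqr := Finset.univ.inf' Finset.univ_nonempty fun i => q i / r i with hmqr
  set Mpr := Finset.univ.sup' Finset.univ_nonempty fun i => p i / r i with hMpr
  set mpr := Finset.univ.inf' Finset.univ_nonempty fun i => p i / r i with hmpr
  have hmpq0 : 0 < mpq := by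
    rw [hmpq, Finset.lt_inf'_iff]
    exact fun i _ => div_pos (hp i) (hq i)
  have hmqr0 : 0 < mqr := by
    rw [hmqr, Finset.lt_inf'_iff]
    exact fun i _ => div_pos (hq i) (hr i)
  have hmpr0 : 0 < mpr := by
    rw [hmpr, Finset.lt_inf'_iff]
    exact fun i _ => div_pos (hp i) (hr i)
  have hmM_pq : mpq ≤ Mpq := by
    obtain ⟨i⟩ := ‹Nonempty ι›
    exact le_trans (Finset.inf'_le _ (Finset.mem_univ i)) (Finset.le_sup' (fun i => p i / q i) (Finset.mem_univ i))
  have hmM_qr : mqr ≤ Mqr := by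
    obtain ⟨i⟩ := ‹Nonempty ι›
    exact le_trans (Finset.inf'_le _ (Finset.mem_univ i)) (Finset.le_sup' (fun i => q i / r i) (Finset.mem_univ i))
  have hmM_pr : mpr ≤ Mpr := by
    obtain ⟨i⟩ := ‹Nonempty ι›
    exact le_trans (Finset.inf'_le _ (Finset.mem_univ i)) (Finset.le_sup' (fun i => p i / r i) (Finset.mem_univ i))
  -- M(p,r) ≤ M(p,q) * M(q,r)
  have hMle : Mpr ≤ Mpq * Mqr := by
    rw [hMpr]
    apply Finset.sup'_le
    intro i _
    have h1 : p i / q i ≤ Mpq := Finset.le_sup' (fun i => p i / q i) (Finset.mem_univ i)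
    have h2 : q i / r i ≤ Mqr := Finset.le_sup' (fun i => q i / r i) (Finset.mem_univ i)
    have : p i / r i = (p i / q i) * (q i / r i) := by
      rw [div_mul_div_comm, mul_comm (p i) (q i), mul_div_mul_left _ _ (hq i).ne']
    rw [this]
    exact mul_le_mul h1 h2 (div_pos (hq i) (hr i)).le
      (le_trans (div_pos (hp i) (hq i)).le h1)
  have hmle : mpq * mqr ≤ mpr := by
    rw [hmpr]
    apply Finset.le_inf'
    intro i _
    have h1 : mpq ≤ p i / q i := Finset.inf'_le _ (Finset.mem_univ i)
    have h2 : mqr ≤ q i / r i := Finset.inf'_le _ (Finset.mem_univ i)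
    have : p i / r i = (p i / q i) * (q i / r i) := by
      rw [div_mul_div_comm, mul_comm (p i) (q i), mul_div_mul_left _ _ (hq i).ne']
    rw [this]
    exact mul_le_mul h1 h2 hmqr0.le (le_trans hmpq0.le h1)
  have hA1 : 1 ≤ Mpq / mpq := (one_le_div hmpq0).2 hmM_pq
  have hB1 : 1 ≤ Mqr / mqr := (one_le_div hmqr0).2 hmM_qr
  have hC0 : 0 < Mpr / mpr := div_pos (lt_of_lt_of_le hmpr0 hmM_pr) hmpr0
  have hMpq0 : 0 < Mpq := lt_of_lt_of_le hmpq0 hmM_pq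
  have hMqr0 : 0 < Mqr := lt_of_lt_of_le hmqr0 hmM_qr
  have hCle : Mpr / mpr ≤ (Mpq / mpq) * (Mqr / mqr) := by
    rw [div_mul_div_comm]
    exact div_le_div₀ (mul_nonneg hMpq0.le hMqr0.le) hMle (mul_pos hmpq0 hmqr0) hmle
  calc tHilbert t p r = tlog t (Mpr / mpr) := rfl
    _ ≤ tlog t ((Mpq / mpq) * (Mqr / mqr)) := tlog_mono t ht1 hC0 hCle
    _ ≤ tlog t (Mpq / mpq) + tlog t (Mqr / mqr) := tlog_mul_le t ht1 hA1 hB1
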